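/- arXiv:0902.1364 — 4 statements merged into one kernel-verified Lean document; each statement's English description precedes it below -/
import Mathlib

section
/- Every k-connected chordal graph with at least k+2 vertices has at least 2k contractible edges. -/
open SimpleGraph

/-- `S` is a vertex separator of `G`: deleting `S` leaves a disconnected graph
(two vertices with no path between them). -/
def IsSeparator {V : Type*} (G : SimpleGraph V) (S : Set V) : Prop :=
  ¬ (G.induce (Sᶜ : Set V)).Preconnected

/-- `S` is a minimal vertex separator of `G`. -/
def MinimalSeparator {V : Type*} (G : SimpleGraph V) (S : Set V) : Prop :=
  IsSeparator G S ∧ ∀ S' ⊂ S, ¬ IsSeparator G S'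

/-- `G` is `k`-connected: more than `k` vertices and every separator has size at least `k`. -/
def KConnected {V : Type*} [Fintype V] (k : ℕ) (G : SimpleGraph V) : Prop :=
  k < Fintype.card V ∧ ∀ S : Set V, IsSeparator G S → k ≤ S.ncard

/-- Vertex connectivity: least size of a set whose removal disconnects the graph
or leaves at most one vertex. -/
noncomputable def vConn {V : Type*} [Fintype V] (G : SimpleGraph V) : ℕ :=
  sInf {n | ∃ S : Set V, S.ncard = n ∧ (IsSeparator G S ∨ (Sᶜ : Set V).ncard ≤ 1)}

/-- Contraction of the edge `{u,v}`: the vertex `v` is deleted and `u` plays the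
role of the merged vertex `z`, adjacent to all former neighbors of `u` or `v`. -/
def contract {V : Type*} (G : SimpleGraph V) (u v : V) :
    SimpleGraph {x : V // x ≠ v} where
  Adj a b := a ≠ b ∧ (G.Adj a b ∨ (a.1 = u ∧ G.Adj v b) ∨ (b.1 = u ∧ G.Adj v a))
  symm := by
    constructor
    rintro a b ⟨h1, h2 | ⟨h3, h4⟩ | ⟨h3, h4⟩⟩
    · exact ⟨h1.symm, Or.inl h2.symm⟩
    · exact ⟨h1.symm, Or.inr (Or.inr ⟨h3, h4⟩)⟩
    · exact ⟨h1.symm, Or.inr (Or.inl ⟨h3, h4⟩)⟩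
  loopless := by constructor; rintro a ⟨h, -⟩; exact h rfl

/-- A tree decomposition of `G` with tree `T` and bags `l`. -/
structure TreeDecomp {V ι : Type*} (G : SimpleGraph V) (T : SimpleGraph ι)
    (l : ι → Set V) : Prop where
  conn : T.Connected
  acyclic : T.IsAcyclic
  coversV : ∀ v : V, ∃ x : ι, v ∈ l x
  coversE : ∀ ⦃u v : V⦄, G.Adj u v → ∃ x : ι, u ∈ l x ∧ v ∈ l x
  subtree : ∀ v : V, (T.induce {x : ι | v ∈ l x}).Connected

/-- A clique tree of `G`: a tree decomposition whose bags are exactly the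
maximal cliques of `G`. -/
def IsCliqueTree {V ι : Type*} (G : SimpleGraph V) (T : SimpleGraph ι)
    (l : ι → Set V) : Prop :=
  TreeDecomp G T l ∧ (∀ x : ι, Maximal G.IsClique (l x)) ∧
    ∀ C : Set V, Maximal G.IsClique C → ∃ x : ι, l x = C

/-- `G` is chordal: every cycle of length at least 4 has a chord. -/
def IsChordal {V : Type*} (G : SimpleGraph V) : Prop :=
  ∀ (v : V) (w : G.Walk v v), w.IsCycle → 4 ≤ w.length →
    ∃ a b : V, G.Adj a b ∧ a ∈ w.support ∧ b ∈ w.support ∧ s(a, b) ∉ w.edges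

/-- A split partition of `G`: `I` is a stable set, `K` a clique, partitioning the vertices. -/
def IsSplitPartition {V : Type*} (G : SimpleGraph V) (I K : Set V) : Prop :=
  I ∪ K = Set.univ ∧ Disjoint I K ∧ (∀ a ∈ I, ∀ b ∈ I, ¬ G.Adj a b) ∧ G.IsClique K


namespace ChordalAux

variable {V : Type*} {G : SimpleGraph V}

/-- Reachable within a set of allowed vertices. -/
def RIn (G : SimpleGraph V) (s : Set V) (a b : V) : Prop :=
  ∃ p : G.Walk a b, ∀ x ∈ p.support, x ∈ s

lemma RIn.refl {s : Set V} {a : V} (ha : a ∈ s) : RIn G s a a :=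
  ⟨Walk.nil, by simpa using ha⟩

lemma RIn.symm {s : Set V} {a b : V} : RIn G s a b → RIn G s b a
  | ⟨p, hp⟩ => ⟨p.reverse, by intro x hx; rw [Walk.support_reverse, List.mem_reverse] at hx; exact hp x hx⟩

lemma RIn.trans {s : Set V} {a b c : V} : RIn G s a b → RIn G s b c → RIn G s a c
  | ⟨p, hp⟩, ⟨q, hq⟩ => ⟨p.append q, by
      intro x hx
      rcases (Walk.mem_support_append_iff _ _).mp hx with h | h
      · exact hp x h
      · exact hq x h⟩

lemma RIn.mem_right {s : Set V} {a b : V} (h : RIn G s a b) : b ∈ s :=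
  h.choose_spec b h.choose.end_mem_support

lemma RIn.mem_left {s : Set V} {a b : V} (h : RIn G s a b) : a ∈ s :=
  h.choose_spec a h.choose.start_mem_support

lemma RIn.extend {s : Set V} {a b c : V} (h : RIn G s a b) (hadj : G.Adj b c) (hc : c ∈ s) :
    RIn G s a c := by
  refine h.trans ⟨Walk.cons hadj Walk.nil, ?_⟩
  intro x hx
  simp only [Walk.support_cons, Walk.support_nil, List.mem_cons, List.mem_singleton] at hx
  rcases hx with rfl | rfl | h'
  · exact h.mem_right
  · exact hc
  · exact absurd h' (by simp)

lemma RIn.of_support {s : Set V} {a b : V} (p : G.Walk a b) (hp : ∀ x ∈ p.support, x ∈ s)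
    {z : V} (hz : z ∈ p.support) : RIn G s a z := by
  classical
  exact ⟨p.takeUntil z hz, fun t ht => hp t (Walk.support_takeUntil_subset _ _ ht)⟩

lemma reachable_induce_of_RIn {s : Set V} :
    ∀ {a b : V} (p : G.Walk a b) (hp : ∀ x ∈ p.support, x ∈ s),
      (G.induce s).Reachable ⟨a, hp a p.start_mem_support⟩ ⟨b, hp b p.end_mem_support⟩ := by
  intro a b p
  induction p with
  | nil => intro hp; exact Reachable.refl _
  | cons h p ih =>
    intro hp
    have hp' : ∀ x ∈ p.support, x ∈ s := fun x hx => hp x (by simp [Walk.support_cons, hx])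
    have h1 : (G.induce s).Adj ⟨_, hp _ (Walk.start_mem_support _)⟩ ⟨_, hp' _ p.start_mem_support⟩ := h
    exact h1.reachable.trans (ih hp')

lemma reachable_induce_iff {s : Set V} (a b : s) :
    (G.induce s).Reachable a b ↔ RIn G s a.1 b.1 := by
  constructor
  · rintro ⟨p⟩
    refine ⟨p.map (Embedding.induce s).toHom, ?_⟩
    intro x hx
    change x ∈ (p.map (Embedding.induce s).toHom).support at hx
    rw [Walk.support_map] at hx
    obtain ⟨y, hy, rfl⟩ := List.mem_map.mp hx
    exact y.2
  · rintro ⟨p, hp⟩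
    exact reachable_induce_of_RIn p hp

end ChordalAux

namespace ChordalAux

variable {V : Type*} {G : SimpleGraph V}

/-- A vertex whose neighborhood is a clique. -/
def Simplicial (G : SimpleGraph V) (v : V) : Prop :=
  ∀ ⦃x y : V⦄, G.Adj v x → G.Adj v y → x ≠ y → G.Adj x y

/-- Walks between vertices other than a simplicial vertex `v` can avoid `v`. -/
lemma avoid {v : V} (hv : Simplicial G v) :
    ∀ (n : ℕ) {a b : V} (p : G.Walk a b), p.length ≤ n → a ≠ v → b ≠ v →
    ∃ q : G.Walk a b, (∀ x ∈ q.support, x ∈ p.support) ∧ v ∉ q.support := by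
  intro n
  induction n with
  | zero =>
    intro a b p hl ha hb
    cases p with
    | nil => exact ⟨Walk.nil, by simp, by simpa using Ne.symm ha⟩
    | cons h p' => simp [Walk.length_cons] at hl
  | succ n ih =>
    intro a b p hl ha hb
    cases p with
    | nil => exact ⟨Walk.nil, by simp, by simpa using Ne.symm ha⟩
    | @cons _ c _ h p' =>
      by_cases hc : c = v
      · cases p' with
        | nil => exact absurd hc hb
        | @cons _ d _ h2 p'' =>
          have h2' : G.Adj v d := hc ▸ h2
          have h' : G.Adj a v := hc ▸ h
          have hd : d ≠ v := h2'.ne'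
          have hlen : p''.length ≤ n := by
            simp only [Walk.length_cons] at hl; omega
          by_cases had : a = d
          · subst had
            obtain ⟨q, hq1, hq2⟩ := ih p'' hlen ha hb
            refine ⟨q, fun x hx => ?_, hq2⟩
            simp only [Walk.support_cons, List.mem_cons]
            exact Or.inr (Or.inr (hq1 x hx))
          · have hadj : G.Adj a d := hv h'.symm h2' had
            obtain ⟨q, hq1, hq2⟩ := ih p'' hlen hd hb
            refine ⟨Walk.cons hadj q, ?_, ?_⟩
            · intro x hx
              simp only [Walk.support_cons, List.mem_cons] at hx ⊢
              rcases hx with rfl | hx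
              · exact Or.inl rfl
              · exact Or.inr (Or.inr (hq1 x hx))
            · simp only [Walk.support_cons, List.mem_cons, not_or]
              exact ⟨Ne.symm ha, hq2⟩
      · have hlen : p'.length ≤ n := by simp only [Walk.length_cons] at hl; omega
        obtain ⟨q, hq1, hq2⟩ := ih p' hlen hc hb
        refine ⟨Walk.cons h q, ?_, ?_⟩
        · intro x hx
          simp only [Walk.support_cons, List.mem_cons] at hx ⊢
          rcases hx with rfl | hx
          · exact Or.inl rfl
          · exact Or.inr (hq1 x hx)
        · simp only [Walk.support_cons, List.mem_cons, not_or]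
          exact ⟨Ne.symm ha, hq2⟩

/-- A walk avoiding `v` lifts to the contraction. -/
lemma lift_contract {u v : V} :
    ∀ {a b : V} (p : G.Walk a b), v ∉ p.support → ∀ (ha : a ≠ v) (hb : b ≠ v),
    ∃ q : (contract G u v).Walk ⟨a, ha⟩ ⟨b, hb⟩, ∀ x ∈ q.support, x.1 ∈ p.support := by
  intro a b p
  induction p with
  | nil => intro _ ha hb; exact ⟨Walk.nil, by simp⟩
  | @cons _ c _ h p' ih =>
    intro hp ha hb
    simp only [Walk.support_cons, List.mem_cons, not_or] at hp
    have hc : c ≠ v := fun hh => hp.2 (hh ▸ p'.start_mem_support)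
    obtain ⟨q, hq⟩ := ih hp.2 hc hb
    have hadj : (contract G u v).Adj ⟨_, ha⟩ ⟨c, hc⟩ :=
      ⟨fun hh => h.ne (congrArg Subtype.val hh), Or.inl h⟩
    refine ⟨Walk.cons hadj q, ?_⟩
    intro x hx
    simp only [Walk.support_cons, List.mem_cons] at hx ⊢
    rcases hx with rfl | hx
    · exact Or.inl rfl
    · exact Or.inr (hq x hx)

/-- Contracting an edge at a simplicial vertex preserves k-connectivity. -/
lemma contract_kconn [Fintype V] [DecidableEq V] {k : ℕ} {u v : V} (hv : Simplicial G v)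
    (hcard : k + 2 ≤ Fintype.card V) (hconn : KConnected k G) :
    KConnected k (contract G u v) := by
  classical
  constructor
  · have h1 : Fintype.card {x : V // x ≠ v} = Fintype.card V - 1 := by
      rw [Fintype.card_subtype_compl, Fintype.card_subtype_eq]
    omega
  · intro S hS
    simp only [IsSeparator, Preconnected, not_forall] at hS
    obtain ⟨α, β, hnr⟩ := hS
    set T : Set V := Subtype.val '' S with hT
    have hTcard : T.ncard = S.ncard := Set.ncard_image_of_injective _ Subtype.val_injective
    have hmem : ∀ (x : {x : V // x ≠ v}), x.1 ∈ Tᶜ → x ∈ (Sᶜ : Set {x : V // x ≠ v}) := by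
      intro x hx hxS
      exact hx ⟨x, hxS, rfl⟩
    have hmem' : ∀ (x : {x : V // x ≠ v}), x ∈ (Sᶜ : Set {x : V // x ≠ v}) → x.1 ∈ Tᶜ := by
      rintro x hx ⟨y, hy, hyx⟩
      exact hx (by rwa [← Subtype.val_injective hyx])
    have hTsep : IsSeparator G T := by
      intro hpre
      apply hnr
      have h2 := hpre ⟨α.1.1, hmem' _ α.2⟩ ⟨β.1.1, hmem' _ β.2⟩
      rw [reachable_induce_iff] at h2
      obtain ⟨p, hp⟩ := h2
      obtain ⟨q, hq, hqv⟩ := avoid hv p.length p le_rfl α.1.2 β.1.2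
      obtain ⟨r, hr⟩ := lift_contract q hqv α.1.2 β.1.2
      have hRIn : RIn (contract G u v) (Sᶜ : Set {x : V // x ≠ v}) α.1 β.1 := by
        refine ⟨r, fun x hx => ?_⟩
        exact hmem x (hp x.1 (hq x.1 (hr x hx)))
      exact (reachable_induce_iff α β).mpr hRIn
    have := hconn.2 T hTsep
    omega

/-- Any vertex with a non-neighbor has at least `k` neighbors. -/
lemma degree_ge [Fintype V] {k : ℕ} (hconn : KConnected k G) {v w : V}
    (hvw : v ≠ w) (hnadj : ¬ G.Adj v w) : k ≤ (G.neighborSet v).ncard := by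
  apply hconn.2
  intro hpre
  have hv : v ∈ (G.neighborSet v)ᶜ := by simp
  have hw : w ∈ (G.neighborSet v)ᶜ := hnadj
  have h2 := hpre ⟨v, hv⟩ ⟨w, hw⟩
  rw [reachable_induce_iff] at h2
  obtain ⟨p, hp⟩ := h2
  cases p with
  | nil => exact hvw rfl
  | @cons _ c _ h p' =>
    exact hp c (by simp [Walk.support_cons]) h

end ChordalAux
namespace ChordalAux

variable {V : Type*} {G : SimpleGraph V}

lemma adj_of_length_one {x y : V} (p : G.Walk x y) (h : p.length = 1) : G.Adj x y := by
  cases p with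
  | nil => simp at h
  | cons h' p' =>
    cases p' with
    | nil => exact h'
    | cons h'' p'' => simp [Walk.length_cons] at h

lemma splice_start [DecidableEq V] {x y d : V} (p : G.Walk x y) (hd : d ∈ p.support)
    (hadj : G.Adj x d) (he : s(x, d) ∉ p.edges) :
    ∃ q : G.Walk x y, q.length < p.length ∧ ∀ z ∈ q.support, z ∈ p.support := by
  cases p with
  | nil =>
    rw [Walk.mem_support_nil_iff] at hd
    exact absurd hd hadj.ne'
  | @cons _ m _ h p' =>
    have hd' : d ∈ p'.support := by
      rw [Walk.support_cons] at hd
      rcases List.mem_cons.mp hd with rfl | h'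
      · exact absurd rfl hadj.ne'
      · exact h'
    refine ⟨Walk.cons hadj (p'.dropUntil d hd'), ?_, ?_⟩
    · have hspec := p'.take_spec hd'
      have hlen : (p'.takeUntil d hd').length + (p'.dropUntil d hd').length = p'.length := by
        conv_rhs => rw [← hspec]
        rw [Walk.length_append]
      have hpos : 0 < (p'.takeUntil d hd').length := by
        rcases Nat.eq_zero_or_pos (p'.takeUntil d hd').length with h0 | h0
        · exfalso
          have : m = d := Walk.eq_of_length_eq_zero h0
          subst this
          exact he (by simp [Walk.edges_cons])
        · exact h0
      simp only [Walk.length_cons]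
      omega
    · intro z hz
      simp only [Walk.support_cons, List.mem_cons] at hz ⊢
      rcases hz with rfl | hz
      · exact Or.inl rfl
      · exact Or.inr (Walk.support_dropUntil_subset p' hd' hz)

lemma splice [DecidableEq V] {x y c d : V} (hadj : G.Adj c d) :
    ∀ (p : G.Walk x y), c ∈ p.support → d ∈ p.support → s(c, d) ∉ p.edges →
    ∃ q : G.Walk x y, q.length < p.length ∧ ∀ z ∈ q.support, z ∈ p.support := by
  intro p
  induction p with
  | nil =>
    intro hc hd _
    rw [Walk.mem_support_nil_iff] at hc hd
    exact absurd (hc.trans hd.symm) hadj.ne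
  | @cons a m _ h p' ih =>
    intro hc hd he
    by_cases hcx : c = a
    · subst hcx
      exact splice_start _ hd hadj he
    · by_cases hdx : d = a
      · subst hdx
        exact splice_start _ hc hadj.symm (by rwa [Sym2.eq_swap])
      · have hc' : c ∈ p'.support := by
          rw [Walk.support_cons] at hc
          exact (List.mem_cons.mp hc).resolve_left hcx
        have hd' : d ∈ p'.support := by
          rw [Walk.support_cons] at hd
          exact (List.mem_cons.mp hd).resolve_left hdx
        have he' : s(c, d) ∉ p'.edges := fun hh => he (by simp [Walk.edges_cons, hh])
        obtain ⟨q, h1, h2⟩ := ih hc' hd' he'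
        refine ⟨Walk.cons h q, ?_, ?_⟩
        · simp only [Walk.length_cons]; omega
        · intro z hz
          simp only [Walk.support_cons, List.mem_cons] at hz ⊢
          rcases hz with rfl | hz
          · exact Or.inl rfl
          · exact Or.inr (h2 z hz)

lemma chordal_induce (hch : IsChordal G) (s : Set V) : IsChordal (G.induce s) := by
  intro v w hw hl
  have hc : (w.map (SimpleGraph.Embedding.induce (G := G) s).toHom).IsCycle :=
    hw.map (SimpleGraph.Embedding.induce (G := G) s).injective
  obtain ⟨a, b, hab, ha, hb, he⟩ := hch _ _ hc (by rwa [Walk.length_map])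
  rw [Walk.support_map] at ha hb
  obtain ⟨a', ha', rfl⟩ := List.mem_map.mp ha
  obtain ⟨b', hb', rfl⟩ := List.mem_map.mp hb
  refine ⟨a', b', hab, ha', hb', ?_⟩
  intro hmem
  apply he
  rw [Walk.edges_map]
  exact List.mem_map.mpr ⟨_, hmem, rfl⟩

lemma shortest_path {x y : V} (P : V → Prop)
    (hex : ∃ p : G.Walk x y, ∀ z ∈ p.support, P z) :
    ∃ p : G.Walk x y, p.IsPath ∧ (∀ z ∈ p.support, P z) ∧
      ∀ q : G.Walk x y, (∀ z ∈ q.support, P z) → p.length ≤ q.length := by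
  classical
  set L := {nn | ∃ p : G.Walk x y, (∀ z ∈ p.support, P z) ∧ p.length = nn} with hL
  have hne : L.Nonempty := ⟨_, hex.choose, hex.choose_spec, rfl⟩
  obtain ⟨p0, hp0, hlen⟩ := Nat.sInf_mem hne
  refine ⟨p0.bypass, p0.bypass_isPath, fun z hz => hp0 z (p0.support_bypass_subset hz), fun q hq => ?_⟩
  calc p0.bypass.length ≤ p0.length := Walk.length_bypass_le _
    _ = sInf L := hlen
    _ ≤ q.length := Nat.sInf_le ⟨q, hq, rfl⟩

lemma exists_nbr_in_side {s A : Set V} {x : V}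
    (hA : ∀ c ∈ A, ∀ d, G.Adj c d → d ∉ s → d ∈ A) :
    ∀ {c b : V} (p : G.Walk c b), b ∉ A → c ∈ A → (∀ z ∈ p.support, z ∉ s \ {x}) →
    ∃ y ∈ A, G.Adj x y := by
  intro c b p
  induction p with
  | nil => intro hbA hc _; exact absurd hc hbA
  | @cons c' m b' h p' ih =>
    intro hbA hc hsup
    by_cases hm : m ∈ s
    · have hmx : m = x := by
        have := hsup m (by simp [Walk.support_cons])
        simp only [Set.mem_diff, Set.mem_singleton_iff, not_and, not_not] at this
        exact this hm
      exact ⟨c', hc, hmx ▸ h.symm⟩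
    · refine ih hbA (hA c' hc m h hm) (fun z hz => hsup z ?_)
      rw [Walk.support_cons]
      exact List.mem_cons_of_mem _ hz

end ChordalAux

namespace ChordalAux

universe u

theorem dirac : ∀ (n : ℕ) (V : Type u) [Fintype V] [DecidableEq V] (G : SimpleGraph V),
    Fintype.card V ≤ n → IsChordal G →
    (∀ a b : V, a ≠ b → G.Adj a b) ∨
      ∃ a b : V, a ≠ b ∧ ¬ G.Adj a b ∧ Simplicial G a ∧ Simplicial G b := by
  intro n
  induction n with
  | zero =>
    intro V _ _ G hn _
    left
    intro a b _
    have : 0 < Fintype.card V := Fintype.card_pos_iff.mpr ⟨a⟩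
    omega
  | succ n ih =>
    intro V _ _ G hn hch
    by_cases hcomp : ∀ a b : V, a ≠ b → G.Adj a b
    · exact Or.inl hcomp
    right
    push_neg at hcomp
    obtain ⟨a, b, hab, hnadj⟩ := hcomp
    classical
    set Sep : Set V → Prop := fun S => S ⊆ ({a, b} : Set V)ᶜ ∧ ¬ RIn G Sᶜ a b with hSepdef
    have hSepU : Sep (({a, b} : Set V)ᶜ) := by
      refine ⟨subset_rfl, ?_⟩
      rintro ⟨p, hp⟩
      cases p with
      | nil => exact hab rfl
      | @cons _ m _ h p' =>
        have hm := hp m (by simp [Walk.support_cons])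
        rw [compl_compl] at hm
        simp only [Set.mem_insert_iff, Set.mem_singleton_iff] at hm
        rcases hm with rfl | rfl
        · exact h.ne rfl
        · exact hnadj h
    have hLne : {m : ℕ | ∃ S, Sep S ∧ S.ncard = m}.Nonempty := ⟨_, _, hSepU, rfl⟩
    obtain ⟨S, hSsep, hScard⟩ := Nat.sInf_mem hLne
    have hmin : ∀ S', Sep S' → S.ncard ≤ S'.ncard := by
      intro S' hS'
      rw [hScard]
      exact Nat.sInf_le ⟨S', hS', rfl⟩
    set A : Set V := {z | RIn G Sᶜ a z} with hAdef
    set B : Set V := {z | RIn G Sᶜ b z} with hBdef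
    have haS : a ∉ S := fun h => by simpa using hSsep.1 h
    have hbS : b ∉ S := fun h => by simpa using hSsep.1 h
    have haA : a ∈ A := RIn.refl haS
    have hbB : b ∈ B := RIn.refl hbS
    have hAS : ∀ z ∈ A, z ∉ S := fun z hz => RIn.mem_right hz
    have hBS : ∀ z ∈ B, z ∉ S := fun z hz => RIn.mem_right hz
    have hAB : ∀ z, z ∈ A → z ∈ B → False := fun z hza hzb => hSsep.2 (RIn.trans hza (RIn.symm hzb))
    have hbA : b ∉ A := fun h => hSsep.2 h
    have haB : a ∉ B := fun h => hSsep.2 (RIn.symm h)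
    have hAext : ∀ c ∈ A, ∀ d, G.Adj c d → d ∉ S → d ∈ A :=
      fun c hc d hcd hd => RIn.extend hc hcd hd
    have hBext : ∀ c ∈ B, ∀ d, G.Adj c d → d ∉ S → d ∈ B :=
      fun c hc d hcd hd => RIn.extend hc hcd hd
    have hnbr : ∀ x ∈ S, (∃ y ∈ A, G.Adj x y) ∧ (∃ y ∈ B, G.Adj x y) := by
      intro x hx
      constructor
      · by_contra hno
        have hsep' : Sep (S \ {x}) := by
          refine ⟨Set.diff_subset.trans hSsep.1, ?_⟩
          rintro ⟨p, hp⟩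
          exact hno (exists_nbr_in_side hAext p hbA haA (fun z hz => hp z hz))
        have hlt := Set.ncard_diff_singleton_lt_of_mem hx (Set.toFinite S)
        have := hmin _ hsep'
        omega
      · by_contra hno
        have hsep' : Sep (S \ {x}) := by
          refine ⟨Set.diff_subset.trans hSsep.1, ?_⟩
          rintro ⟨p, hp⟩
          refine hno (exists_nbr_in_side hBext p.reverse haB hbB ?_)
          intro z hz
          rw [Walk.support_reverse, List.mem_reverse] at hz
          exact hp z hz
        have hlt := Set.ncard_diff_singleton_lt_of_mem hx (Set.toFinite S)
        have := hmin _ hsep'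
        omega
    have hclique : ∀ x ∈ S, ∀ y ∈ S, x ≠ y → G.Adj x y := by
      intro x hx y hy hxy
      by_contra hnxy
      obtain ⟨⟨x', hx'A, hxx'⟩, ⟨x'', hx''B, hxx''⟩⟩ := hnbr x hx
      obtain ⟨⟨y', hy'A, hyy'⟩, ⟨y'', hy''B, hyy''⟩⟩ := hnbr y hy
      have hexA : ∃ p : G.Walk x y, ∀ z ∈ p.support, z = x ∨ z = y ∨ z ∈ A := by
        obtain ⟨w0, hw0⟩ := RIn.trans (RIn.symm hx'A) hy'A
        have hw0A : ∀ z ∈ w0.support, z ∈ A :=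
          fun z hz => RIn.trans hx'A (RIn.of_support w0 hw0 hz)
        refine ⟨Walk.cons hxx' (w0.concat hyy'.symm), ?_⟩
        intro z hz
        simp only [Walk.support_cons, Walk.support_concat, List.mem_cons, List.concat_eq_append,
          List.mem_append, List.mem_singleton] at hz
        rcases hz with rfl | hz | hz
        · exact Or.inl rfl
        · exact Or.inr (Or.inr (hw0A z hz))
        · rcases hz with rfl | hz
          · exact Or.inr (Or.inl rfl)
          · simp at hz
      have hexB : ∃ p : G.Walk x y, ∀ z ∈ p.support, z = x ∨ z = y ∨ z ∈ B := by
        obtain ⟨w0, hw0⟩ := RIn.trans (RIn.symm hx''B) hy''B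
        have hw0B : ∀ z ∈ w0.support, z ∈ B :=
          fun z hz => RIn.trans hx''B (RIn.of_support w0 hw0 hz)
        refine ⟨Walk.cons hxx'' (w0.concat hyy''.symm), ?_⟩
        intro z hz
        simp only [Walk.support_cons, Walk.support_concat, List.mem_cons, List.concat_eq_append,
          List.mem_append, List.mem_singleton] at hz
        rcases hz with rfl | hz | hz
        · exact Or.inl rfl
        · exact Or.inr (Or.inr (hw0B z hz))
        · rcases hz with rfl | hz
          · exact Or.inr (Or.inl rfl)
          · simp at hz
      obtain ⟨pA, hpApath, hpAmem, hpAmin⟩ := shortest_path _ hexA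
      obtain ⟨pB, hpBpath, hpBmem, hpBmin⟩ := shortest_path _ hexB
      have hxA : x ∉ A := fun h => hAS x h hx
      have hyA : y ∉ A := fun h => hAS y h hy
      have hxB : x ∉ B := fun h => hBS x h hx
      have hyB : y ∉ B := fun h => hBS y h hy
      have hlA : 2 ≤ pA.length := by
        rcases Nat.lt_or_ge pA.length 2 with hl | hl
        · have : pA.length = 0 ∨ pA.length = 1 := by omega
          rcases this with h0 | h1
          · exact absurd (Walk.eq_of_length_eq_zero h0) hxy
          · exact absurd (adj_of_length_one pA h1) hnxy
        · exact hl
      have hlB : 2 ≤ pB.length := by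
        rcases Nat.lt_or_ge pB.length 2 with hl | hl
        · have : pB.length = 0 ∨ pB.length = 1 := by omega
          rcases this with h0 | h1
          · exact absurd (Walk.eq_of_length_eq_zero h0) hxy
          · exact absurd (adj_of_length_one pB h1) hnxy
        · exact hl
      have hsupAB : ∀ z, z ∈ pA.support → z ∈ pB.support → z = x ∨ z = y := by
        intro z h1 h2
        rcases hpAmem z h1 with rfl | rfl | hA1
        · exact Or.inl rfl
        · exact Or.inr rfl
        · rcases hpBmem z h2 with rfl | rfl | hB1
          · exact Or.inl rfl
          · exact Or.inr rfl
          · exact absurd hB1 (fun hh => hAB z hA1 hh)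
      set w := pA.append pB.reverse with hwdef
      have hwsup : ∀ z, z ∈ w.support ↔ z ∈ pA.support ∨ z ∈ pB.support := by
        intro z
        rw [hwdef, Walk.mem_support_append_iff, Walk.support_reverse, List.mem_reverse]
      have hedisj : ∀ e, e ∈ pA.edges → e ∈ pB.edges → False := by
        intro e
        revert e
        refine Sym2.ind ?_
        intro c d heA heB
        have hc1 := pA.fst_mem_support_of_mem_edges heA
        have hd1 := pA.snd_mem_support_of_mem_edges heA
        have hc2 := pB.fst_mem_support_of_mem_edges heB
        have hd2 := pB.snd_mem_support_of_mem_edges heB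
        have hadj : G.Adj c d := pA.adj_of_mem_edges heA
        rcases hsupAB _ hc1 hc2 with rfl | rfl
        · rcases hsupAB _ hd1 hd2 with rfl | rfl
          · exact hadj.ne rfl
          · exact hnxy hadj
        · rcases hsupAB _ hd1 hd2 with rfl | rfl
          · exact hnxy hadj.symm
          · exact hadj.ne rfl
      have hcyc : w.IsCycle := by
        refine ⟨⟨⟨?_⟩, ?_⟩, ?_⟩
        · rw [hwdef, Walk.edges_append, Walk.edges_reverse, List.nodup_append]
          exact ⟨hpApath.edges_nodup, List.nodup_reverse.mpr hpBpath.edges_nodup,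
            by rintro e he1 _ he2 rfl; exact hedisj e he1 (List.mem_reverse.mp he2)⟩
        · intro hnil
          have hl0 : w.length = 0 := by rw [hnil]; rfl
          rw [hwdef, Walk.length_append, Walk.length_reverse] at hl0
          omega
        · have hws : w.support.tail = pA.support.tail ++ pB.reverse.support.tail := by
            rw [hwdef, Walk.support_append, pA.support_eq_cons]
            simp [List.cons_append]
          rw [hws, List.nodup_append]
          refine ⟨?_, ?_, ?_⟩
          · have := hpApath.support_nodup
            rw [pA.support_eq_cons] at this
            exact (List.nodup_cons.mp this).2
          · have := hpBpath.reverse.support_nodup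
            rw [pB.reverse.support_eq_cons] at this
            exact (List.nodup_cons.mp this).2
          · rintro z hz1 _ hz2 rfl
            have hzx : z ≠ x := by
              have := hpApath.support_nodup
              rw [pA.support_eq_cons] at this
              rintro rfl
              exact (List.nodup_cons.mp this).1 hz1
            have hzy : z ≠ y := by
              have := hpBpath.reverse.support_nodup
              rw [pB.reverse.support_eq_cons] at this
              rintro rfl
              exact (List.nodup_cons.mp this).1 hz2
            have h1 : z ∈ pA.support := by
              rw [pA.support_eq_cons]
              exact List.mem_cons_of_mem _ hz1
            have h2 : z ∈ pB.support := by
              have : z ∈ pB.reverse.support := by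
                rw [pB.reverse.support_eq_cons]
                exact List.mem_cons_of_mem _ hz2
              rwa [Walk.support_reverse, List.mem_reverse] at this
            rcases hsupAB z h1 h2 with rfl | rfl
            · exact hzx rfl
            · exact hzy rfl
      have hwlen : 4 ≤ w.length := by
        rw [hwdef, Walk.length_append, Walk.length_reverse]
        omega
      obtain ⟨c, d, hcd, hcw, hdw, hew⟩ := hch _ w hcyc hwlen
      have hsplA : c ∈ pA.support → d ∈ pA.support → False := by
        intro hc' hd'
        have heA : s(c, d) ∉ pA.edges := fun hh => hew (by
          rw [hwdef, Walk.edges_append]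
          exact List.mem_append_left _ hh)
        obtain ⟨q, hql, hqs⟩ := splice hcd pA hc' hd' heA
        have := hpAmin q (fun z hz => hpAmem z (hqs z hz))
        omega
      have hsplB : c ∈ pB.support → d ∈ pB.support → False := by
        intro hc' hd'
        have heB : s(c, d) ∉ pB.edges := fun hh => hew (by
          rw [hwdef, Walk.edges_append, Walk.edges_reverse]
          exact List.mem_append_right _ (List.mem_reverse.mpr hh))
        obtain ⟨q, hql, hqs⟩ := splice hcd pB hc' hd' heB
        have := hpBmin q (fun z hz => hpBmem z (hqs z hz))
        omega
      have hmixed : ∀ c' d', G.Adj c' d' → c' ∈ pA.support → c' ∉ pB.support →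
          d' ∈ pB.support → d' ∉ pA.support → False := by
        intro c' d' hcd' h1 h2 h3 h4
        have hc'A : c' ∈ A := by
          rcases hpAmem c' h1 with rfl | rfl | h
          · exact absurd pB.start_mem_support h2
          · exact absurd pB.end_mem_support h2
          · exact h
        have hd'B : d' ∈ B := by
          rcases hpBmem d' h3 with rfl | rfl | h
          · exact absurd pA.start_mem_support h4
          · exact absurd pA.end_mem_support h4
          · exact h
        exact hAB d' (hAext c' hc'A d' hcd' (hBS d' hd'B)) hd'B
      rcases (hwsup c).mp hcw with hcA | hcB <;> rcases (hwsup d).mp hdw with hdA | hdB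
      · exact hsplA hcA hdA
      · by_cases h2 : c ∈ pB.support
        · exact hsplB h2 hdB
        · by_cases h4 : d ∈ pA.support
          · exact hsplA hcA h4
          · exact hmixed c d hcd hcA h2 hdB h4
      · by_cases h2 : d ∈ pB.support
        · exact hsplB hcB h2
        · by_cases h4 : c ∈ pA.support
          · exact hsplA h4 hdA
          · exact hmixed d c hcd.symm hdA h2 hcB h4
      · exact hsplB hcB hdB
    have getSimp : ∀ (C : Set V) (c0 e0 : V), c0 ∈ C → e0 ∉ C → e0 ∉ S →
        (∀ z ∈ C, ∀ d, G.Adj z d → d ∉ S → d ∈ C) → (∀ z ∈ C, z ∉ S) →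
        ∃ z ∈ C, Simplicial G z := by
      intro C c0 e0 hc0 he0 he0S hCext hCS
      have he0CS : e0 ∉ C ∪ S := by
        intro hh
        rcases (Set.mem_union _ _ _).mp hh with h | h
        · exact he0 h
        · exact he0S h
      have hcardlt : Fintype.card ↥(C ∪ S) ≤ n := by
        have h1 := Fintype.card_subtype_lt (p := fun z => z ∈ C ∪ S) he0CS
        have h2 : Fintype.card ↥(C ∪ S) =
            @Fintype.card {x // (fun z => z ∈ C ∪ S) x} (Subtype.fintype fun z => z ∈ C ∪ S) :=
          @Fintype.card_congr _ _ (C.fintypeUnion S) (Subtype.fintype fun z => z ∈ C ∪ S)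
            (Equiv.refl _)
        exact Nat.lt_succ_iff.mp (by convert lt_of_lt_of_le h1 hn)
      rcases ih ↥(C ∪ S) (G.induce (C ∪ S)) hcardlt (chordal_induce hch _) with
        hc | ⟨p, q, hpq, hnpq, hsp, hsq⟩
      · refine ⟨c0, hc0, ?_⟩
        intro s t hs ht hst
        have hsC : s ∈ C ∪ S := by
          by_cases hsS : s ∈ S
          · exact Or.inr hsS
          · exact Or.inl (hCext c0 hc0 s hs hsS)
        have htC : t ∈ C ∪ S := by
          by_cases htS : t ∈ S
          · exact Or.inr htS
          · exact Or.inl (hCext c0 hc0 t ht htS)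
        exact hc ⟨s, hsC⟩ ⟨t, htC⟩ (fun hh => hst (congrArg Subtype.val hh))
      · have key : ∀ (r : ↥(C ∪ S)), r.1 ∈ C → Simplicial (G.induce (C ∪ S)) r →
            Simplicial G r.1 := by
          intro r hrC hrs s t hs ht hst
          have hsC : s ∈ C ∪ S := by
            by_cases hsS : s ∈ S
            · exact Or.inr hsS
            · exact Or.inl (hCext r.1 hrC s hs hsS)
          have htC : t ∈ C ∪ S := by
            by_cases htS : t ∈ S
            · exact Or.inr htS
            · exact Or.inl (hCext r.1 hrC t ht htS)
          exact hrs (x := ⟨s, hsC⟩) (y := ⟨t, htC⟩) hs ht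
            (fun hh => hst (congrArg Subtype.val hh))
        by_cases hpS : p.1 ∈ S
        · have hqS : q.1 ∉ S := by
            intro hqS
            exact hnpq (hclique _ hpS _ hqS (fun hh => hpq (Subtype.ext hh)))
          have hqC : q.1 ∈ C := ((Set.mem_union _ _ _).mp q.2).resolve_right hqS
          exact ⟨q.1, hqC, key q hqC hsq⟩
        · have hpC : p.1 ∈ C := ((Set.mem_union _ _ _).mp p.2).resolve_right hpS
          exact ⟨p.1, hpC, key p hpC hsp⟩
    obtain ⟨zA, hzA, hzAs⟩ := getSimp A a b haA hbA hbS hAext hAS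
    obtain ⟨zB, hzB, hzBs⟩ := getSimp B b a hbB haB haS hBext hBS
    refine ⟨zA, zB, ?_, ?_, hzAs, hzBs⟩
    · intro hh
      exact hAB zA hzA (hh ▸ hzB)
    · intro hadj
      exact hAB zB (hAext zA hzA zB hadj (hBS zB hzB)) hzB

end ChordalAux

namespace ChordalAux

variable {V : Type*} [Fintype V] [DecidableEq V] {G : SimpleGraph V}

lemma main (G : SimpleGraph V) (k : ℕ)
    (hcard : k + 2 ≤ Fintype.card V) (hconn : KConnected k G) (hch : IsChordal G) :
    2 * k ≤ {e : Sym2 V | e ∈ G.edgeSet ∧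
        ∃ u v : V, e = s(u, v) ∧ KConnected k (contract G u v)}.ncard := by
  classical
  set target : Set (Sym2 V) := {e : Sym2 V | e ∈ G.edgeSet ∧
    ∃ u v : V, e = s(u, v) ∧ KConnected k (contract G u v)} with htarget
  have hEv : ∀ v : V, Simplicial G v →
      ((fun x => s(x, v)) '' (G.neighborSet v)) ⊆ target := by
    rintro v hv e ⟨x, hx, rfl⟩
    refine ⟨(adj_symm G hx : G.Adj x v), x, v, rfl, contract_kconn hv hcard hconn⟩
  have hEvcard : ∀ v : V, ((fun x => s(x, v)) '' (G.neighborSet v)).ncard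
      = (G.neighborSet v).ncard := by
    intro v
    exact Set.ncard_image_of_injOn (fun x _ y _ h => Sym2.congr_left.mp h)
  have hEvInter : ∀ v w : V, v ≠ w →
      ((fun x => s(x, v)) '' (G.neighborSet v)) ∩ ((fun x => s(x, w)) '' (G.neighborSet w))
        ⊆ {s(w, v)} := by
    rintro v w hvw e ⟨⟨x, hx, rfl⟩, ⟨y, hy, he⟩⟩
    rcases Sym2.eq_iff.mp he with ⟨h1, h2⟩ | ⟨h1, h2⟩
    · exact absurd h2.symm hvw
    · rw [Set.mem_singleton_iff, h2]
  rcases dirac (Fintype.card V) V G le_rfl hch with hcomp | ⟨v, w, hvw, hnadj, hsv, hsw⟩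
  · -- complete graph
    have hsimp : ∀ z : V, Simplicial G z := fun z x y hx hy hxy => hcomp x y hxy
    obtain ⟨v, w, hvw⟩ := Fintype.exists_pair_of_one_lt_card (α := V) (by omega)
    have hN : ∀ z : V, (G.neighborSet z).ncard = Fintype.card V - 1 := by
      intro z
      have hz : G.neighborSet z = {z}ᶜ := by
        ext t
        simp only [mem_neighborSet, Set.mem_compl_iff, Set.mem_singleton_iff]
        constructor
        · exact fun h => h.ne'
        · exact fun h => hcomp z t (Ne.symm h)
      rw [hz]
      have h1 := Set.ncard_add_ncard_compl ({z} : Set V)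
      rw [Set.ncard_singleton] at h1
      rw [Nat.card_eq_fintype_card] at h1
      omega
    have hsub : ((fun x => s(x, v)) '' (G.neighborSet v)) ∪
        ((fun x => s(x, w)) '' (G.neighborSet w)) ⊆ target :=
      Set.union_subset (hEv v (hsimp v)) (hEv w (hsimp w))
    have hieq := Set.ncard_union_add_ncard_inter
      ((fun x => s(x, v)) '' (G.neighborSet v)) ((fun x => s(x, w)) '' (G.neighborSet w))
      (Set.toFinite _) (Set.toFinite _)
    have hinter : (((fun x => s(x, v)) '' (G.neighborSet v)) ∩
        ((fun x => s(x, w)) '' (G.neighborSet w))).ncard ≤ 1 := by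
      have := Set.ncard_le_ncard (hEvInter v w hvw) (Set.toFinite _)
      rwa [Set.ncard_singleton] at this
    have hfin : target.Finite := Set.toFinite _
    have hle := Set.ncard_le_ncard hsub hfin
    rw [hEvcard v, hEvcard w, hN v, hN w] at hieq
    omega
  · -- two nonadjacent simplicial vertices
    have hdisj : Disjoint ((fun x => s(x, v)) '' (G.neighborSet v))
        ((fun x => s(x, w)) '' (G.neighborSet w)) := by
      rw [Set.disjoint_left]
      rintro e he1 he2
      have := hEvInter v w hvw ⟨he1, he2⟩
      rw [Set.mem_singleton_iff] at this
      obtain ⟨y, hy, he⟩ := he2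
      rw [this] at he1
      obtain ⟨x, hx, he'⟩ := he1
      rcases Sym2.eq_iff.mp he' with ⟨h1, h2⟩ | ⟨h1, h2⟩
      · rw [h1] at hx
        exact hnadj hx
      · exact hvw h2
    have hsub : ((fun x => s(x, v)) '' (G.neighborSet v)) ∪
        ((fun x => s(x, w)) '' (G.neighborSet w)) ⊆ target :=
      Set.union_subset (hEv v hsv) (hEv w hsw)
    have hle := Set.ncard_le_ncard hsub (Set.toFinite _)
    rw [Set.ncard_union_eq hdisj (Set.toFinite _) (Set.toFinite _), hEvcard v, hEvcard w] at hle
    have h1 : k ≤ (G.neighborSet v).ncard := degree_ge hconn hvw hnadj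
    have h2 : k ≤ (G.neighborSet w).ncard :=
      degree_ge hconn (Ne.symm hvw) (fun h => hnadj h.symm)
    omega

end ChordalAux


/-- A `k`-connected chordal graph with at least `k+2` vertices has
at least `2k` contractible edges. -/
theorem stmt_9 {V : Type*} [Fintype V] [DecidableEq V] (G : SimpleGraph V) (k : ℕ)
    (hcard : k + 2 ≤ Fintype.card V) (hconn : KConnected k G) (hch : IsChordal G) :
    2 * k ≤ {e : Sym2 V | e ∈ G.edgeSet ∧
        ∃ u v : V, e = s(u, v) ∧ KConnected k (contract G u v)}.ncard :=
  ChordalAux.main G k hcard hconn hch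
end

section
/- If an edge e of a k-connected graph G with at least k+2 vertices lies in a unique maximal clique of G, and G is chordal, then e is contractible. -/
open SimpleGraph

-- helper: transport reachability along a "pseudo-hom"
lemma reach_map' {α β : Type*} {H1 : SimpleGraph α} {H2 : SimpleGraph β} (f : α → β)
    (hf : ∀ ⦃a b⦄, H1.Adj a b → f a = f b ∨ H2.Adj (f a) (f b)) {a b : α}
    (h : H1.Reachable a b) : H2.Reachable (f a) (f b) := by
  obtain ⟨p⟩ := h
  induction p with
  | nil => exact Reachable.refl _
  | cons h q ih =>
    rcases hf h with h' | h'
    · rw [h']; exact ih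
    · exact (h'.reachable).trans ih

-- take/drop with explicit lengths
lemma exists_walk_take {α : Type*} {H : SimpleGraph α} {a b : α} (p : H.Walk a b) {i : ℕ}
    (hi : i ≤ p.length) : ∃ q : H.Walk a (p.getVert i), q.length = i := by
  induction p generalizing i with
  | nil =>
    obtain rfl : i = 0 := Nat.le_zero.mp hi
    exact ⟨Walk.nil, rfl⟩
  | @cons u c w h q ih =>
    cases i with
    | zero => exact ⟨Walk.nil.copy rfl (Walk.getVert_zero _).symm, by simp⟩
    | succ i =>
      obtain ⟨r, hr⟩ := ih (Nat.succ_le_succ_iff.1 hi)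
      exact ⟨Walk.cons h r, by simp [hr]⟩

lemma exists_walk_drop {α : Type*} {H : SimpleGraph α} {a b : α} (p : H.Walk a b) {i : ℕ}
    (hi : i ≤ p.length) : ∃ q : H.Walk (p.getVert i) b, q.length = p.length - i := by
  induction p generalizing i with
  | nil =>
    obtain rfl : i = 0 := Nat.le_zero.mp hi
    exact ⟨Walk.nil, rfl⟩
  | @cons u c w h q ih =>
    cases i with
    | zero => exact ⟨(Walk.cons h q).copy (Walk.getVert_zero _).symm rfl, by simp⟩
    | succ i =>
      obtain ⟨r, hr⟩ := ih (Nat.succ_le_succ_iff.1 hi)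
      exact ⟨r.copy rfl rfl, by simpa using hr⟩

lemma edge_getVert_succ_mem {α : Type*} {H : SimpleGraph α} {a b : α} (p : H.Walk a b) {i : ℕ}
    (hi : i < p.length) : s(p.getVert i, p.getVert (i+1)) ∈ p.edges := by
  induction p generalizing i with
  | nil => simp at hi
  | @cons u c w h q ih =>
    cases i with
    | zero => simp [Walk.getVert_cons_succ]
    | succ i =>
      simp only [Walk.getVert_cons_succ, Walk.edges_cons, List.mem_cons]
      exact Or.inr (ih (Nat.succ_lt_succ_iff.1 hi))

-- existence of maximal cliques
lemma exists_maximal_clique {α : Type*} [Finite α] (G : SimpleGraph α) {D : Set α}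
    (hD : G.IsClique D) : ∃ C, Maximal G.IsClique C ∧ D ⊆ C := by
  obtain ⟨C, hC, hmax⟩ := Set.Finite.exists_maximalFor (id : Set α → Set α)
    {C | G.IsClique C ∧ D ⊆ C} (Set.toFinite _) ⟨D, hD, subset_rfl⟩
  refine ⟨C, ⟨hC.1, fun C' hC' hle => ?_⟩, hC.2⟩
  exact (hmax ⟨hC', hC.2.trans hle⟩ hle).ge

lemma sep_neighbor {V : Type*} (G : SimpleGraph V) {S : Set V}
    (hmin : MinimalSeparator G S) {s : V} (hs : s ∈ S) (w : ↥(Sᶜ : Set V)) :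
    ∃ x : ↥(Sᶜ : Set V), G.Adj s x ∧ (G.induce (Sᶜ : Set V)).Reachable x w := by
  have hsub : S \ {s} ⊂ S := Set.sdiff_singleton_ssubset.mpr hs
  have hpre : (G.induce ((S \ {s})ᶜ : Set V)).Preconnected := by
    by_contra hnp
    exact hmin.2 _ hsub hnp
  have hsmem : s ∈ ((S \ {s})ᶜ : Set V) := by simp
  have hwmem : (w : V) ∈ ((S \ {s})ᶜ : Set V) := by
    have := w.2
    simp only [Set.mem_compl_iff, Set.mem_diff] at this ⊢
    tauto
  have key : ∀ (c e : ↥((S \ {s})ᶜ : Set V))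
      (_ : (G.induce ((S \ {s})ᶜ : Set V)).Walk c e) (_ : (e : V) = s) (hc : (c : V) ∉ S),
      ∃ x : ↥(Sᶜ : Set V), G.Adj s x ∧
        (G.induce (Sᶜ : Set V)).Reachable ⟨c, hc⟩ x := by
    intro c e q
    induction q with
    | nil => intro he hc; rw [he] at hc; exact absurd hs hc
    | @cons c d e h q ih =>
      intro he hc
      have hadj : G.Adj (c : V) (d : V) := h
      by_cases hd : (d : V) ∈ S
      · have hds : (d : V) = s := by
          have := d.2
          simp only [Set.mem_compl_iff, Set.mem_diff, not_and, not_not] at this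
          exact this hd
        refine ⟨⟨c, hc⟩, ?_, Reachable.refl _⟩
        have h2 : G.Adj (d : V) (c : V) := hadj.symm
        rw [hds] at h2
        exact h2
      · obtain ⟨x, hx1, hx2⟩ := ih he hd
        refine ⟨x, hx1, Reachable.trans ?_ hx2⟩
        exact Adj.reachable (by exact hadj)
  obtain ⟨q⟩ := hpre ⟨w, hwmem⟩ ⟨s, hsmem⟩
  obtain ⟨x, hx1, hx2⟩ := key ⟨w, hwmem⟩ ⟨s, hsmem⟩ q rfl (by exact w.2)
  exact ⟨x, hx1, by convert hx2.symm⟩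

lemma common_neighbor {V : Type*} (G : SimpleGraph V) (hch : IsChordal G) {S : Set V}
    (hmin : MinimalSeparator G S) {u v : V} (hu : u ∈ S) (hv : v ∈ S) (he : G.Adj u v)
    (w : ↥(Sᶜ : Set V)) :
    ∃ z : ↥(Sᶜ : Set V), G.Adj u z ∧ G.Adj v z ∧ (G.induce (Sᶜ : Set V)).Reachable z w := by
  classical
  set H := G.induce (Sᶜ : Set V) with hH
  set L : Set ℕ := {m | ∃ (x x' : ↥(Sᶜ : Set V)) (p : H.Walk x x'),
    G.Adj u x ∧ G.Adj v x' ∧ H.Reachable x w ∧ p.length = m} with hLdef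
  have hLne : L.Nonempty := by
    obtain ⟨x, hx1, hx2⟩ := sep_neighbor G hmin hu w
    obtain ⟨x', hx1', hx2'⟩ := sep_neighbor G hmin hv w
    obtain ⟨p⟩ := hx2.trans hx2'.symm
    exact ⟨p.length, x, x', p, hx1, hx1', hx2, rfl⟩
  set n := sInf L with hn
  obtain ⟨x, x', p0, hux, hvx', hxw, hlen0⟩ := Nat.sInf_mem hLne
  set p := p0.bypass with hpdef
  have hp : p.IsPath := p0.bypass_isPath
  have hplen : p.length = n := by
    have h1 : p.length ∈ L := ⟨x, x', p, hux, hvx', hxw, rfl⟩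
    have h2 := Nat.sInf_le h1
    have h3 : p.length ≤ p0.length := p0.length_bypass_le
    omega
  by_cases hn0 : n = 0
  · have hxx : x = x' := Walk.eq_of_length_eq_zero (p := p) (by omega)
    exact ⟨x, hux, hxx ▸ hvx', hxw⟩
  have hn1 : 1 ≤ n := Nat.one_le_iff_ne_zero.mpr hn0
  let f : H →g G := ⟨Subtype.val, fun {a b} h => h⟩
  set p' := p.map f with hp'
  have hp'path : p'.IsPath := Walk.map_isPath_of_injective Subtype.val_injective hp
  have hp'len : p'.length = n := by rw [hp', Walk.length_map, hplen]
  have hsupS : ∀ c ∈ p'.support, c ∉ S := by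
    intro c hc
    rw [hp', Walk.support_map] at hc
    obtain ⟨c2, hc2, rfl⟩ := List.mem_map.mp hc
    exact c2.2
  have husup : u ∉ p'.support := fun h => hsupS u h hu
  have hvsup : v ∉ p'.support := fun h => hsupS v h hv
  have hreach : ∀ c ∈ p.support, H.Reachable c w := fun c h =>
    (Reachable.symm ⟨p.takeUntil c h⟩).trans hxw
  have hidx : ∀ c ∈ p'.support, ∃ (c2 : ↥(Sᶜ : Set V)) (j : ℕ),
      (c2 : V) = c ∧ j ≤ n ∧ p.getVert j = c2 ∧ c2 ∈ p.support := by
    intro c hc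
    rw [hp', Walk.support_map] at hc
    obtain ⟨c2, hc2, rfl⟩ := List.mem_map.mp hc
    obtain ⟨j, hgv, hj⟩ := Walk.mem_support_iff_exists_getVert.mp hc2
    exact ⟨c2, j, rfl, by omega, hgv, hc2⟩
  -- build the cycle
  have hx'v : G.Adj (x' : V) v := hvx'.symm
  have hvu : G.Adj v u := he.symm
  have h1 : u ≠ (x' : V) := fun h => x'.2 (by rw [← h]; exact hu)
  have h2 : ((x : V)) ≠ v := fun h => x.2 (by rw [h]; exact hv)
  have h2' : ((x' : V)) ≠ v := fun h => x'.2 (by rw [h]; exact hv)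
  have h3 : u ≠ v := he.ne
  have hxu : u ≠ (x : V) := fun h => x.2 (by rw [← h]; exact hu)
  set q : G.Walk (x : V) u := p'.append (Walk.cons hx'v (Walk.cons hvu Walk.nil)) with hq
  have hqsupp : q.support = p'.support ++ [v, u] := by
    rw [hq, Walk.support_append]; rfl
  have hqpath : q.IsPath := by
    rw [Walk.isPath_def, hqsupp]
    refine List.Nodup.append hp'path.support_nodup ?_ ?_
    · simp [h3.symm]
    · intro a ha hb
      simp only [List.mem_cons, List.mem_singleton, List.not_mem_nil, or_false] at hb
      rcases hb with rfl | rfl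
      · exact hvsup ha
      · exact husup ha
  have hqedges : q.edges = p'.edges ++ [s((x' : V), v), s(v, u)] := by
    rw [hq, Walk.edges_append]; rfl
  set cyc : G.Walk u u := Walk.cons hux q with hcyc
  have hcyccyc : cyc.IsCycle := by
    rw [hcyc, Walk.cons_isCycle_iff]
    refine ⟨hqpath, ?_⟩
    rw [hqedges]
    simp only [List.mem_append, List.mem_cons, List.mem_singleton, List.not_mem_nil, or_false]
    push_neg
    refine ⟨fun h => husup (Walk.fst_mem_support_of_mem_edges p' h), ?_, ?_⟩
    · intro hcontra
      rcases Sym2.eq_iff.mp hcontra with ⟨ha, _⟩ | ⟨ha, _⟩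
      · exact h1 ha
      · exact h3 ha
    · intro hcontra
      rcases Sym2.eq_iff.mp hcontra with ⟨ha, _⟩ | ⟨_, hb⟩
      · exact h3 ha
      · exact h2 hb
  have hcyclen : 4 ≤ cyc.length := by
    have : cyc.length = n + 3 := by
      rw [hcyc, hq]
      simp [Walk.length_append, hp'len]
    omega
  obtain ⟨a, b, hab, ha, hb, hnab⟩ := hch u cyc hcyccyc hcyclen
  have hcycsupp : cyc.support = u :: (p'.support ++ [v, u]) := by
    rw [hcyc, Walk.support_cons, hqsupp]
  have hmemcases : ∀ c, c ∈ cyc.support → c = u ∨ c = v ∨ c ∈ p'.support := by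
    intro c hc
    rw [hcycsupp] at hc
    simp only [List.mem_cons, List.mem_append, List.mem_singleton, List.not_mem_nil,
      or_false] at hc
    tauto
  have hcycedges : cyc.edges = s(u, (x:V)) :: (p'.edges ++ [s((x':V), v), s(v, u)]) := by
    rw [hcyc, Walk.edges_cons, hqedges]
  -- key case analyses
  have keyU : ∀ c ∈ p'.support, G.Adj u c → s(u, c) ∉ cyc.edges → False := by
    intro c hc hadj hne
    obtain ⟨c2, j, hval, hj, hgv, hmem⟩ := hidx c hc
    by_cases hcx : c = (x : V)
    · exact hne (by rw [hcycedges, hcx]; exact List.mem_cons_self)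
    · have hj0 : j ≠ 0 := by
        intro h; rw [h, Walk.getVert_zero] at hgv; exact hcx (by rw [← hval, ← hgv])
      obtain ⟨r, hr⟩ := exists_walk_drop p (show j ≤ p.length by omega)
      have hL2 : n - j ∈ L := by
        refine ⟨c2, x', r.copy (by rw [hgv]) rfl, by rwa [hval], hvx',
          hreach c2 hmem, ?_⟩
        rw [Walk.length_copy, hr, hplen]
      have := Nat.sInf_le hL2
      omega
  have keyV : ∀ c ∈ p'.support, G.Adj v c → s(v, c) ∉ cyc.edges → False := by
    intro c hc hadj hne
    obtain ⟨c2, j, hval, hj, hgv, hmem⟩ := hidx c hc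
    by_cases hcx : c = (x' : V)
    · refine hne ?_
      rw [hcycedges, hcx]
      simp [Sym2.eq_swap]
    · have hjn : j ≠ n := by
        intro h
        rw [h, ← hplen, Walk.getVert_length] at hgv
        exact hcx (by rw [← hval, ← hgv])
      obtain ⟨t, ht⟩ := exists_walk_take p (show j ≤ p.length by omega)
      have hL2 : j ∈ L := by
        refine ⟨x, c2, t.copy rfl (by rw [hgv]), hux, by rwa [hval], hxw, ?_⟩
        rw [Walk.length_copy, ht]
      have := Nat.sInf_le hL2
      omega
  have keyP : ∀ c d, c ∈ p'.support → d ∈ p'.support → G.Adj c d →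
      s(c, d) ∉ cyc.edges → False := by
    intro c d hcm hdm hadj hne
    obtain ⟨c2, i, hvali, hi, hgvi, hmemi⟩ := hidx c hcm
    obtain ⟨d2, j, hvalj, hj, hgvj, hmemj⟩ := hidx d hdm
    have hcd : c ≠ d := hadj.ne
    have hij : i ≠ j := by
      intro h; rw [h, hgvj] at hgvi; exact hcd (by rw [← hvali, ← hvalj, hgvi])
    have hHadj : H.Adj c2 d2 := by
      show G.Adj (c2 : V) (d2 : V)
      rw [hvali, hvalj]; exact hadj
    have hs1 : n ≤ i + 1 + (n - j) := by
      obtain ⟨t, ht⟩ := exists_walk_take p (show i ≤ p.length by omega)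
      obtain ⟨r, hr⟩ := exists_walk_drop p (show j ≤ p.length by omega)
      have hL2 : i + 1 + (n - j) ∈ L := by
        refine ⟨x, x', (t.copy rfl (by rw [hgvi])).append
          (Walk.cons hHadj (r.copy (by rw [hgvj]) rfl)), hux, hvx', hxw, ?_⟩
        simp [Walk.length_append, ht, hr, hplen]
        omega
      exact Nat.sInf_le hL2
    have hs2 : n ≤ j + 1 + (n - i) := by
      obtain ⟨t, ht⟩ := exists_walk_take p (show j ≤ p.length by omega)
      obtain ⟨r, hr⟩ := exists_walk_drop p (show i ≤ p.length by omega)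
      have hL2 : j + 1 + (n - i) ∈ L := by
        refine ⟨x, x', (t.copy rfl (by rw [hgvj])).append
          (Walk.cons hHadj.symm (r.copy (by rw [hgvi]) rfl)), hux, hvx', hxw, ?_⟩
        simp [Walk.length_append, ht, hr, hplen]
        omega
      exact Nat.sInf_le hL2
    have hcases : j = i + 1 ∨ i = j + 1 := by omega
    have hedge : s(c, d) ∈ p'.edges := by
      rcases hcases with h | h
      · have hmem2 := edge_getVert_succ_mem p (show i < p.length by omega)
        rw [hgvi, ← h, hgvj] at hmem2
        rw [hp', Walk.edges_map]
        exact List.mem_map.mpr ⟨s(c2, d2), hmem2, by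
          rw [Sym2.map_pair_eq]; rw [show (f : ↥(Sᶜ : Set V) → V) = Subtype.val from rfl,
            hvali, hvalj]⟩
      · have hmem2 := edge_getVert_succ_mem p (show j < p.length by omega)
        rw [hgvj, ← h, hgvi] at hmem2
        rw [hp', Walk.edges_map, Sym2.eq_swap]
        exact List.mem_map.mpr ⟨s(d2, c2), hmem2, by
          rw [Sym2.map_pair_eq]; rw [show (f : ↥(Sᶜ : Set V) → V) = Subtype.val from rfl,
            hvali, hvalj]⟩
    exact hne (by rw [hcycedges]; exact List.mem_cons_of_mem _ (List.mem_append_left _ hedge))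
  rcases hmemcases a ha with rfl | rfl | hain
  · rcases hmemcases b hb with rfl | rfl | hbin
    · exact absurd rfl hab.ne
    · exact absurd (by rw [hcycedges, Sym2.eq_swap]; simp) hnab
    · exact absurd (keyU b hbin hab hnab) (by simp)
  · rcases hmemcases b hb with rfl | rfl | hbin
    · exact absurd (by rw [hcycedges]; simp) hnab
    · exact absurd rfl hab.ne
    · exact absurd (keyV b hbin hab hnab) (by simp)
  · rcases hmemcases b hb with rfl | rfl | hbin
    · exact absurd (keyU a hain hab.symm (by rwa [Sym2.eq_swap] at hnab)) (by simp)
    · exact absurd (keyV a hain hab.symm (by rwa [Sym2.eq_swap] at hnab)) (by simp)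
    · exact absurd (keyP a b hain hbin hab hnab) (by simp)

lemma clique3 {V : Type*} {G : SimpleGraph V} {u v z : V} (h1 : G.Adj u v) (h2 : G.Adj u z)
    (h3 : G.Adj v z) : G.IsClique {u, v, z} := by
  intro a ha b hb hne
  simp only [Set.mem_insert_iff, Set.mem_singleton_iff] at ha hb
  rcases ha with rfl | rfl | rfl <;> rcases hb with rfl | rfl | rfl <;>
    first
      | exact absurd rfl hne
      | exact h1 | exact h1.symm | exact h2 | exact h2.symm | exact h3 | exact h3.symm

lemma core_contra {V : Type*} [Finite V] (G : SimpleGraph V) (hch : IsChordal G) {S : Set V}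
    (hmin : MinimalSeparator G S) {u v : V} (hu : u ∈ S) (hv : v ∈ S) (he : G.Adj u v)
    (huniq : ∃! C : Set V, Maximal G.IsClique C ∧ u ∈ C ∧ v ∈ C) : False := by
  obtain ⟨C, ⟨hCmax, hCu, hCv⟩, hCuniq⟩ := huniq
  have hnp := hmin.1
  rw [IsSeparator, Preconnected] at hnp
  push_neg at hnp
  obtain ⟨w1, w2, hw⟩ := hnp
  obtain ⟨z1, hz1u, hz1v, hz1r⟩ := common_neighbor G hch hmin hu hv he w1
  obtain ⟨z2, hz2u, hz2v, hz2r⟩ := common_neighbor G hch hmin hu hv he w2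
  have hz1C : (z1 : V) ∈ C := by
    obtain ⟨C1, hC1max, hC1sub⟩ := exists_maximal_clique G (clique3 he hz1u hz1v)
    have : C1 = C := hCuniq C1 ⟨hC1max, hC1sub (by simp), hC1sub (by simp)⟩
    exact this ▸ hC1sub (by simp)
  have hz2C : (z2 : V) ∈ C := by
    obtain ⟨C2, hC2max, hC2sub⟩ := exists_maximal_clique G (clique3 he hz2u hz2v)
    have : C2 = C := hCuniq C2 ⟨hC2max, hC2sub (by simp), hC2sub (by simp)⟩
    exact this ▸ hC2sub (by simp)
  have hz12 : z1 ≠ z2 := by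
    rintro rfl
    exact hw (hz1r.symm.trans hz2r)
  have hadj : G.Adj (z1 : V) (z2 : V) :=
    hCmax.1 hz1C hz2C (fun h => hz12 (Subtype.ext h))
  have hreach : (G.induce (Sᶜ : Set V)).Reachable z1 z2 := Adj.reachable (by exact hadj)
  exact hw (hz1r.symm.trans (hreach.trans hz2r))

/-- In a `k`-connected chordal graph with at least `k+2` vertices,
an edge lying in a unique maximal clique is contractible. -/
theorem stmt_10 {V : Type*} [Fintype V] [DecidableEq V] (G : SimpleGraph V) (k : ℕ)
    (hcard : k + 2 ≤ Fintype.card V) (hconn : KConnected k G) (hch : IsChordal G)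
    (u v : V) (he : G.Adj u v)
    (huniq : ∃! C : Set V, Maximal G.IsClique C ∧ u ∈ C ∧ v ∈ C) :
    KConnected k (contract G u v) := by
  classical
  have hcardsub : Fintype.card {x : V // x ≠ v} = Fintype.card V - 1 := by
    rw [show Fintype.card {x : V // x ≠ v} = Fintype.card {x : V // ¬ (x = v)} from rfl,
      Fintype.card_subtype_compl, Fintype.card_subtype_eq]
  refine ⟨by omega, ?_⟩
  intro S' hS'
  by_contra hlt
  push_neg at hlt
  set u' : {x : V // x ≠ v} := ⟨u, he.ne⟩ with hu'
  by_cases huS : u' ∈ S'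
  · -- case: u is in the separator; lift to S̃ = insert v (val '' S')
    set St : Set V := insert v (Subtype.val '' S') with hSt
    have hsep : IsSeparator G St := by
      intro hpre
      apply hS'
      intro a b
      have hmem : ∀ c : ↥(S'ᶜ : Set {x : V // x ≠ v}), (c : {x : V // x ≠ v}).1 ∈ (Stᶜ : Set V) := by
        intro c
        simp only [hSt, Set.mem_compl_iff, Set.mem_insert_iff, not_or]
        refine ⟨(c : {x : V // x ≠ v}).2, ?_⟩
        rintro ⟨y, hy, hyv⟩
        exact c.2 (by rwa [Subtype.ext hyv] at hy)
      let g : ↥(Stᶜ : Set V) → ↥(S'ᶜ : Set {x : V // x ≠ v}) := fun c =>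
        ⟨⟨c.1, fun h => c.2 (by rw [h]; exact Set.mem_insert _ _)⟩, fun h => c.2 (by
          exact Set.mem_insert_iff.mpr (Or.inr ⟨_, h, rfl⟩))⟩
      have hg : ∀ ⦃c d : ↥(Stᶜ : Set V)⦄, (G.induce (Stᶜ : Set V)).Adj c d →
          g c = g d ∨ ((contract G u v).induce (S'ᶜ : Set {x : V // x ≠ v})).Adj (g c) (g d) := by
        intro c d hcd
        right
        have hadj : G.Adj (c : V) (d : V) := hcd
        exact ⟨fun h => hadj.ne (congrArg (Subtype.val : {x : V // x ≠ v} → V) h), Or.inl hadj⟩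
      have := reach_map' g hg (hpre ⟨(a : {x : V // x ≠ v}).1, hmem a⟩
        ⟨(b : {x : V // x ≠ v}).1, hmem b⟩)
      have hga : ∀ c : ↥(S'ᶜ : Set {x : V // x ≠ v}), g ⟨(c : {x : V // x ≠ v}).1, hmem c⟩ = c := by
        intro c; apply Subtype.ext; apply Subtype.ext; rfl
      rwa [hga a, hga b] at this
    have hk := hconn.2 St hsep
    have hvSt : v ∉ (Subtype.val '' S' : Set V) := by
      rintro ⟨y, _, hy⟩; exact y.2 hy
    have hcardSt : St.ncard = S'.ncard + 1 := by
      rw [hSt, Set.ncard_insert_of_notMem hvSt,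
        Set.ncard_image_of_injective _ Subtype.val_injective]
    have hmin : MinimalSeparator G St := by
      refine ⟨hsep, fun T hT hTsep => ?_⟩
      have h1 := hconn.2 T hTsep
      have h2 : T.ncard < St.ncard := Set.ncard_lt_ncard hT (Set.toFinite _)
      omega
    exact core_contra G hch hmin (Set.mem_insert_iff.mpr (Or.inr ⟨u', huS, rfl⟩))
      (Set.mem_insert _ _) he huniq
  · -- case: u not in separator; lift to val '' S'
    set St : Set V := Subtype.val '' S' with hSt
    have hsep : IsSeparator G St := by
      intro hpre
      apply hS'
      intro a b
      have hmem : ∀ c : ↥(S'ᶜ : Set {x : V // x ≠ v}), (c : {x : V // x ≠ v}).1 ∈ (Stᶜ : Set V) := by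
        intro c
        rintro ⟨y, hy, hyv⟩
        exact c.2 (by rwa [Subtype.ext hyv] at hy)
      let g : ↥(Stᶜ : Set V) → ↥(S'ᶜ : Set {x : V // x ≠ v}) := fun c =>
        if h : (c : V) = v then ⟨u', huS⟩
        else ⟨⟨c.1, h⟩, fun hmem => c.2 ⟨⟨c.1, h⟩, hmem, rfl⟩⟩
      have hg : ∀ ⦃c d : ↥(Stᶜ : Set V)⦄, (G.induce (Stᶜ : Set V)).Adj c d →
          g c = g d ∨ ((contract G u v).induce (S'ᶜ : Set {x : V // x ≠ v})).Adj (g c) (g d) := by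
        intro c d hcd
        have hadj : G.Adj (c : V) (d : V) := hcd
        by_cases hc : (c : V) = v <;> by_cases hd : (d : V) = v
        · exact absurd (hc.trans hd.symm) hadj.ne
        · by_cases hdu : (d : V) = u
          · left
            simp only [g, dif_pos hc, dif_neg hd]
            apply Subtype.ext; apply Subtype.ext
            exact hdu.symm
          · right
            simp only [g, dif_pos hc, dif_neg hd]
            refine ⟨fun h => hdu (congrArg (Subtype.val : {x : V // x ≠ v} → V) h).symm,
              Or.inr (Or.inl ⟨rfl, ?_⟩)⟩
            show G.Adj v (d : V)
            rw [← hc]; exact hadj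
        · by_cases hcu : (c : V) = u
          · left
            simp only [g, dif_neg hc, dif_pos hd]
            apply Subtype.ext; apply Subtype.ext
            exact hcu
          · right
            simp only [g, dif_neg hc, dif_pos hd]
            refine ⟨fun h => hcu (congrArg (Subtype.val : {x : V // x ≠ v} → V) h),
              Or.inr (Or.inr ⟨rfl, ?_⟩)⟩
            show G.Adj v (c : V)
            rw [← hd]; exact hadj.symm
        · right
          simp only [g, dif_neg hc, dif_neg hd]
          exact ⟨fun h => hadj.ne (congrArg (Subtype.val : {x : V // x ≠ v} → V) h), Or.inl hadj⟩
      have hnv : ∀ c : ↥(S'ᶜ : Set {x : V // x ≠ v}), ((c : {x : V // x ≠ v}) : V) ≠ v :=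
        fun c => (c : {x : V // x ≠ v}).2
      have := reach_map' g hg (hpre ⟨(a : {x : V // x ≠ v}).1, hmem a⟩
        ⟨(b : {x : V // x ≠ v}).1, hmem b⟩)
      have hga : ∀ c : ↥(S'ᶜ : Set {x : V // x ≠ v}), g ⟨(c : {x : V // x ≠ v}).1, hmem c⟩ = c := by
        intro c
        simp only [g, dif_neg (hnv c)]
      rwa [hga a, hga b] at this
    have hk := hconn.2 St hsep
    rw [hSt, Set.ncard_image_of_injective _ Subtype.val_injective] at hk
    omega
end

section
/- Let G be a regular k-connected split graph with at least k+2 vertices. Then G is contraction critical: no edge of G is contractible. -/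
open SimpleGraph

lemma vConn_complete {V : Type*} [Fintype V] (G : SimpleGraph V)
    (hG : ∀ a b : V, a ≠ b → G.Adj a b) (x : V) :
    vConn G = Fintype.card V - 1 := by
  have hpre : ∀ S : Set V, (G.induce (Sᶜ : Set V)).Preconnected := by
    intro S a b
    rcases eq_or_ne a b with rfl | h
    · exact Reachable.refl a
    · exact SimpleGraph.Adj.reachable (hG a.1 b.1 (fun e => h (Subtype.ext e)))
  have hns : ∀ S, ¬ IsSeparator G S := fun S hS => hS (hpre S)
  have hc : ({x}ᶜ : Set V).ncard = Fintype.card V - 1 := by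
    have h1 := Set.ncard_add_ncard_compl ({x} : Set V)
    rw [Set.ncard_singleton, Nat.card_eq_fintype_card] at h1
    omega
  have hmem : Fintype.card V - 1 ∈ {n | ∃ S : Set V, S.ncard = n ∧ (IsSeparator G S ∨ (Sᶜ : Set V).ncard ≤ 1)} := by
    refine ⟨({x}ᶜ : Set V), hc, Or.inr ?_⟩
    rw [compl_compl, Set.ncard_singleton]
  refine le_antisymm (Nat.sInf_le hmem) (le_csInf ⟨_, hmem⟩ ?_)
  rintro m ⟨S, rfl, hS | hS⟩
  · exact absurd hS (hns S)
  · have h1 := Set.ncard_add_ncard_compl S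
    rw [Nat.card_eq_fintype_card] at h1
    omega

lemma split_regular_complete {V : Type*} [Fintype V] [DecidableEq V] (G : SimpleGraph V)
    [DecidableRel G.Adj] (I K : Set V) (hsplit : IsSplitPartition G I K)
    (d : ℕ) (hd : G.IsRegularOfDegree d) {u v : V} (huv : G.Adj u v) :
    ∀ a b : V, a ≠ b → G.Adj a b := by
  classical
  obtain ⟨hIK, hdisj, hI, hK⟩ := hsplit
  have hmemIK : ∀ x : V, x ∈ I ∨ x ∈ K := by
    intro x
    have : x ∈ I ∪ K := hIK ▸ Set.mem_univ x
    exact this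
  have hnotKI : ∀ x, x ∈ K → x ∉ I := fun x hx hxi => hdisj.ne_of_mem hxi hx rfl
  by_cases hIe : I = ∅
  · intro a b hab
    rcases hmemIK a with ha | ha
    · simp [hIe] at ha
    rcases hmemIK b with hb | hb
    · simp [hIe] at hb
    exact hK ha hb hab
  · obtain ⟨a0, ha0⟩ := Set.nonempty_iff_ne_empty.mpr hIe
    set Kf : Finset V := K.toFinset with hKf
    have hmemKf : ∀ x, x ∈ Kf ↔ x ∈ K := by intro x; simp [hKf]
    set m := Kf.card with hm
    -- K is nonempty
    have hKne : ∃ c, c ∈ K := by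
      by_contra hc
      push_neg at hc
      have hu : u ∈ I := (hmemIK u).resolve_right (hc u)
      have hv : v ∈ I := (hmemIK v).resolve_right (hc v)
      exact hI u hu v hv huv
    obtain ⟨c0, hc0⟩ := hKne
    have f1 : ∀ c ∈ K, Kf.erase c ⊆ G.neighborFinset c := by
      intro c hc x hx
      rw [Finset.mem_erase] at hx
      rw [SimpleGraph.mem_neighborFinset]
      exact hK hc ((hmemKf x).mp hx.2) (fun e => hx.1 e.symm)
    have hdeg : ∀ x : V, (G.neighborFinset x).card = d := fun x => hd x
    have hm1d : m - 1 ≤ d := by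
      have := Finset.card_le_card (f1 c0 hc0)
      rw [Finset.card_erase_of_mem ((hmemKf c0).mpr hc0), hdeg] at this
      exact this
    have f2 : ∀ a ∈ I, G.neighborFinset a ⊆ Kf := by
      intro a ha x hx
      rw [SimpleGraph.mem_neighborFinset] at hx
      rcases hmemIK x with hxI | hxK
      · exact absurd hx (hI a ha x hxI)
      · exact (hmemKf x).mpr hxK
    have hdm' : d ≤ m := by
      have := Finset.card_le_card (f2 a0 ha0)
      rw [hdeg] at this; exact this
    by_cases hdm : d = m
    · -- every vertex of I is adjacent to all of K; I = {a0}
      have f3 : ∀ a ∈ I, G.neighborFinset a = Kf := by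
        intro a ha
        refine Finset.eq_of_subset_of_card_le (f2 a ha) ?_
        rw [hdeg]; omega
      have hIone : ∀ b ∈ I, b = a0 := by
        intro b hb
        by_contra hba
        have hsub : insert a0 (insert b (Kf.erase c0)) ⊆ G.neighborFinset c0 := by
          intro x hx
          rcases Finset.mem_insert.mp hx with rfl | hx
          · rw [SimpleGraph.mem_neighborFinset]
            have : c0 ∈ G.neighborFinset x := by
              rw [f3 x ha0]; exact (hmemKf c0).mpr hc0
            rw [SimpleGraph.mem_neighborFinset] at this
            exact this.symm
          rcases Finset.mem_insert.mp hx with rfl | hx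
          · rw [SimpleGraph.mem_neighborFinset]
            have : c0 ∈ G.neighborFinset x := by
              rw [f3 x hb]; exact (hmemKf c0).mpr hc0
            rw [SimpleGraph.mem_neighborFinset] at this
            exact this.symm
          · exact f1 c0 hc0 hx
        have hcard := Finset.card_le_card hsub
        have ha0K : a0 ∉ Kf := fun h => hnotKI a0 ((hmemKf a0).mp h) ha0
        have hbK : b ∉ Kf := fun h => hnotKI b ((hmemKf b).mp h) hb
        rw [hdeg] at hcard
        rw [Finset.card_insert_of_notMem, Finset.card_insert_of_notMem,
          Finset.card_erase_of_mem ((hmemKf c0).mpr hc0)] at hcard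
        · have hmpos : 1 ≤ m := Finset.card_pos.mpr ⟨c0, (hmemKf c0).mpr hc0⟩
          omega
        · exact fun h => hbK (Finset.mem_of_mem_erase h)
        · intro h
          rcases Finset.mem_insert.mp h with h | h
          · exact hba h.symm
          · exact ha0K (Finset.mem_of_mem_erase h)
      -- completeness
      intro x y hxy
      have hadjIK : ∀ a ∈ I, ∀ c ∈ K, G.Adj a c := by
        intro a ha c hc
        have : c ∈ G.neighborFinset a := by rw [f3 a ha]; exact (hmemKf c).mpr hc
        rwa [SimpleGraph.mem_neighborFinset] at this
      rcases hmemIK x with hx | hx <;> rcases hmemIK y with hy | hy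
      · exact absurd ((hIone x hx).trans (hIone y hy).symm) hxy
      · exact hadjIK x hx y hy
      · exact (hadjIK y hy x hx).symm
      · exact hK hx hy hxy
    · -- d = m - 1, derive contradiction
      exfalso
      have hdm1 : d = m - 1 := by omega
      have f3' : ∀ c ∈ K, G.neighborFinset c = Kf.erase c := by
        intro c hc
        refine (Finset.eq_of_subset_of_card_le (f1 c hc) ?_).symm
        rw [hdeg, Finset.card_erase_of_mem ((hmemKf c).mpr hc)]; omega
      -- a0 has no neighbors
      have hdeg0 : G.neighborFinset a0 = ∅ := by
        rw [Finset.eq_empty_iff_forall_notMem]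
        intro x hx
        have hxK : x ∈ K := (hmemKf x).mp (f2 a0 ha0 hx)
        rw [SimpleGraph.mem_neighborFinset] at hx
        have : a0 ∈ G.neighborFinset x := by
          rw [SimpleGraph.mem_neighborFinset]; exact hx.symm
        rw [f3' x hxK] at this
        exact hnotKI a0 ((hmemKf a0).mp (Finset.mem_of_mem_erase this)) ha0
      have hd0 : d = 0 := by
        have := hdeg a0
        rw [hdeg0] at this; simpa using this.symm
      have : v ∈ G.neighborFinset u := by
        rw [SimpleGraph.mem_neighborFinset]; exact huv
      have := Finset.card_pos.mpr ⟨v, this⟩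
      rw [hdeg u] at this
      omega

/-- A regular `k`-connected split graph with at least `k+2`
vertices is contraction critical. -/
theorem stmt_13 {V : Type*} [Fintype V] [DecidableEq V] (G : SimpleGraph V) [DecidableRel G.Adj] (k : ℕ)
    (I K : Set V) (hsplit : IsSplitPartition G I K)
    (hreg : ∃ d : ℕ, G.IsRegularOfDegree d)
    (hcard : k + 2 ≤ Fintype.card V) (hconn : KConnected k G) :
    ∀ u v : V, G.Adj u v → vConn (contract G u v) < vConn G := by
  intro u v huv
  obtain ⟨d, hd⟩ := hreg
  have hcomp : ∀ a b : V, a ≠ b → G.Adj a b :=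
    split_regular_complete G I K hsplit d hd huv
  have h2 : 2 ≤ Fintype.card V := Fintype.one_lt_card_iff.mpr ⟨u, v, huv.ne⟩
  have hcc : ∀ a b : {x : V // x ≠ v}, a ≠ b → (contract G u v).Adj a b :=
    fun a b h => ⟨h, Or.inl (hcomp a.1 b.1 (fun e => h (Subtype.ext e)))⟩
  rw [vConn_complete G hcomp u, vConn_complete (contract G u v) hcc ⟨u, huv.ne⟩]
  have hcs : Fintype.card {x : V // x ≠ v} = Fintype.card V - 1 := by
    have h1 : Fintype.card {x : V // ¬ x = v} = Fintype.card V - Fintype.card {x : V // x = v} :=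
      Fintype.card_subtype_compl _
    rw [Fintype.card_subtype_eq] at h1
    exact h1
  rw [hcs]
  omega
end

section
/- Let G be a k-connected graph and e ∈ E(G) an edge whose endpoints are not both contained in any minimum vertex cut of G. Then G.e is k-connected. -/
open SimpleGraph

private lemma reach_aux {A B : Type*} {H : SimpleGraph A} {H' : SimpleGraph B} (f : A → B)
    (hf : ∀ ⦃a b⦄, H.Adj a b → f a = f b ∨ H'.Adj (f a) (f b)) :
    ∀ {a b : A}, H.Reachable a b → H'.Reachable (f a) (f b) := by
  intro a b h
  obtain ⟨w⟩ := h
  induction w with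
  | nil => exact SimpleGraph.Reachable.refl _
  | cons hadj p ih =>
    rcases hf hadj with heq | hadj'
    · rw [heq]; exact ih
    · exact hadj'.reachable.trans ih


/-- If no minimum vertex cut (a separator of size `k`) of the
`k`-connected graph `G` contains both endpoints of `e`, then `G.e` is
`k`-connected. -/
theorem stmt_18 {V : Type*} [Fintype V] [DecidableEq V] (G : SimpleGraph V) (k : ℕ)
    (hcard : k + 2 ≤ Fintype.card V) (hconn : KConnected k G)
    (u v : V) (he : G.Adj u v)
    (hno : ¬ ∃ S : Set V, IsSeparator G S ∧ S.ncard = k ∧ u ∈ S ∧ v ∈ S) :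
    KConnected k (contract G u v) := by
  obtain ⟨hk, hsep⟩ := hconn
  have huv : u ≠ v := he.ne
  constructor
  · have hc : Fintype.card {x : V // x ≠ v} = Fintype.card V - 1 := by
      simp [ne_eq, Fintype.card_subtype_compl, Fintype.card_subtype_eq]
    omega
  · intro S' hS'
    by_contra hlt
    push_neg at hlt
    set S₀ : Set V := Subtype.val '' S' with hS₀def
    have hS₀card : S₀.ncard = S'.ncard :=
      Set.ncard_image_of_injective _ Subtype.val_injective
    have hnotmem : ∀ (x : V) (hx : x ≠ v), x ∉ S₀ → (⟨x, hx⟩ : {x : V // x ≠ v}) ∉ S' := by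
      intro x hx hxS hmem
      exact hxS ⟨⟨x, hx⟩, hmem, rfl⟩
    have hdown : ∀ (c : ↥(S'ᶜ)), (c.1.1 : V) ∉ S₀ := by
      intro c hc
      obtain ⟨y, hy, hval⟩ := hc
      exact c.2 (Subtype.ext hval ▸ hy)
    by_cases hz : (⟨u, huv⟩ : {x : V // x ≠ v}) ∈ S'
    · -- Case A : the merged vertex lies in S'
      have huS₀ : u ∈ S₀ := ⟨_, hz, rfl⟩
      have hvS₀ : v ∉ S₀ := by rintro ⟨⟨x, hx⟩, -, h⟩; exact hx h
      have hsep1 : IsSeparator G (insert v S₀) := by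
        intro hpre
        apply hS'
        intro a b
        have key : ∀ (c : ↥(S'ᶜ)), (c.1.1 : V) ∈ ((insert v S₀)ᶜ : Set V) := by
          intro c
          simp only [Set.mem_compl_iff, Set.mem_insert_iff, not_or]
          exact ⟨c.1.2, hdown c⟩
        let f : ((insert v S₀)ᶜ : Set V) → ↥(S'ᶜ) := fun x =>
          ⟨⟨x.1, fun h => x.2 (by rw [h]; exact Set.mem_insert _ _)⟩,
            hnotmem _ _ (fun h => x.2 (Set.mem_insert_of_mem _ h))⟩
        have hf : ∀ ⦃a b : ((insert v S₀)ᶜ : Set V)⦄,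
            (G.induce ((insert v S₀)ᶜ : Set V)).Adj a b →
            f a = f b ∨ ((contract G u v).induce (S'ᶜ : Set _)).Adj (f a) (f b) := by
          intro a b hab
          have hab' : G.Adj a.1 b.1 := hab
          exact Or.inr ⟨fun hh => hab'.ne (congrArg (fun (t : {x : V // x ≠ v}) => t.1) hh), Or.inl hab'⟩
        have hreach := reach_aux f hf (hpre ⟨a.1.1, key a⟩ ⟨b.1.1, key b⟩)
        have ha : f ⟨a.1.1, key a⟩ = a := Subtype.ext (Subtype.ext rfl)
        have hb : f ⟨b.1.1, key b⟩ = b := Subtype.ext (Subtype.ext rfl)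
        rwa [ha, hb] at hreach
      have hfin : S₀.Finite := S₀.toFinite
      have hcard1 : (insert v S₀).ncard = S'.ncard + 1 := by
        rw [Set.ncard_insert_of_notMem hvS₀ hfin, hS₀card]
      have hge := hsep _ hsep1
      exact hno ⟨insert v S₀, hsep1, by omega,
        Set.mem_insert_of_mem _ huS₀, Set.mem_insert _ _⟩
    · -- Case B : the merged vertex is not in S'
      have hpre : ¬ IsSeparator G S₀ := fun h => absurd (hsep _ h) (by omega)
      rw [IsSeparator, not_not] at hpre
      apply hS'
      intro a b
      have key : ∀ (c : ↥(S'ᶜ)), (c.1.1 : V) ∈ (S₀ᶜ : Set V) := fun c => hdown c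
      let f : (S₀ᶜ : Set V) → ↥(S'ᶜ) := fun x =>
        ⟨⟨if (x : V) = v then u else x.1, by
            by_cases h : (x : V) = v
            · simp only [if_pos h]; exact huv
            · simp only [if_neg h]; exact h⟩, by
          by_cases h : (x : V) = v
          · simp only [if_pos h]; exact hz
          · simp only [if_neg h]; exact hnotmem _ h x.2⟩
      have hf : ∀ ⦃p q : (S₀ᶜ : Set V)⦄, (G.induce (S₀ᶜ : Set V)).Adj p q →
          f p = f q ∨ ((contract G u v).induce (S'ᶜ : Set _)).Adj (f p) (f q) := by
        intro p q hpq
        have hpq' : G.Adj p.1 q.1 := hpq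
        by_cases hp : (p : V) = v <;> by_cases hq : (q : V) = v
        · exact absurd (hq ▸ hp) hpq'.ne
        · -- p = v, q ≠ v
          by_cases hqu : (q : V) = u
          · left
            exact Subtype.ext (Subtype.ext (by show (if (p : V) = v then u else p.1) = (if (q : V) = v then u else q.1); simp [if_pos hp, if_neg hq, hqu]))
          · right
            refine ⟨?_, Or.inr (Or.inl ⟨?_, ?_⟩)⟩
            · intro hh
              have h2 : (if (p : V) = v then u else p.1) = (if (q : V) = v then u else q.1) :=
                congrArg (fun (t : {x : V // x ≠ v}) => t.1) hh
              rw [if_pos hp, if_neg hq] at h2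
              exact hqu h2.symm
            · show (if (p : V) = v then u else p.1) = u
              rw [if_pos hp]
            · show G.Adj v (if (q : V) = v then u else q.1)
              rw [if_neg hq]
              exact hp ▸ hpq'
        · -- q = v, p ≠ u handled
          by_cases hpu : (p : V) = u
          · left
            exact Subtype.ext (Subtype.ext (by show (if (p : V) = v then u else p.1) = (if (q : V) = v then u else q.1); simp [if_pos hq, if_neg hp, hpu]))
          · right
            refine ⟨?_, Or.inr (Or.inr ⟨?_, ?_⟩)⟩
            · intro hh
              have h2 : (if (p : V) = v then u else p.1) = (if (q : V) = v then u else q.1) :=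
                congrArg (fun (t : {x : V // x ≠ v}) => t.1) hh
              rw [if_pos hq, if_neg hp] at h2
              exact hpu h2
            · show (if (q : V) = v then u else q.1) = u
              rw [if_pos hq]
            · show G.Adj v (if (p : V) = v then u else p.1)
              rw [if_neg hp]
              exact hq ▸ hpq'.symm
        · right
          refine ⟨?_, Or.inl ?_⟩
          · intro hh
            have h2 : (if (p : V) = v then u else p.1) = (if (q : V) = v then u else q.1) :=
              congrArg (fun (t : {x : V // x ≠ v}) => t.1) hh
            rw [if_neg hp, if_neg hq] at h2
            exact hpq'.ne h2
          · show G.Adj (if (p : V) = v then u else p.1) (if (q : V) = v then u else q.1)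
            rw [if_neg hp, if_neg hq]
            exact hpq'
      have hreach := reach_aux f hf (hpre ⟨a.1.1, key a⟩ ⟨b.1.1, key b⟩)
      have ha : f ⟨a.1.1, key a⟩ = a := Subtype.ext (Subtype.ext (if_neg a.1.2))
      have hb : f ⟨b.1.1, key b⟩ = b := Subtype.ext (Subtype.ext (if_neg b.1.2))
      rwa [ha, hb] at hreach
end
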